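/- arXiv:1311.5573 — 2 statements merged into one kernel-verified Lean document; each statement's English description precedes it below -/
import Mathlib

section
/- Given a 0-SLT grammar G (an SLT grammar in which all nonterminals have rank 0, i.e., a DAG) and a subset R of the nodes of val(G), there exists a straight-line program (SLP) of size O(|G|+|R|) that generates the concatenation, in pre-order of the nodes of R, of the serializations of the subtrees of val(G) rooted at the nodes in R. -/
/-- Trees over terminal labels `L`, nonterminals `N`, the leaf symbol `_`
(constructor `leaf`) and parameters `y_i` (constructor `param i`, 1-indexed).
Terminal-labeled nodes have exactly two children; a nonterminal node has a
list of children (its length being constrained by `ArityOk`). -/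
inductive PTree (L N : Type) where
  | leaf : PTree L N
  | param : ℕ → PTree L N
  | term : L → PTree L N → PTree L N → PTree L N
  | nt : N → List (PTree L N) → PTree L N

namespace PTree

variable {L N : Type}

/-- The pre-order list of parameter indices occurring in a tree. -/
def paramList : PTree L N → List ℕ
  | .leaf => []
  | .param i => [i]
  | .term _ l r => paramList l ++ paramList r
  | .nt _ ts => (ts.attach.map (fun t => paramList t.1)).flatten
decreasing_by
  all_goals simp_wf
  all_goals try omega
  all_goals (have := List.sizeOf_lt_of_mem t.2; omega)

/-- The number of nodes of a tree. -/
def nodeCount : PTree L N → ℕ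
  | .leaf => 1
  | .param _ => 1
  | .term _ l r => 1 + nodeCount l + nodeCount r
  | .nt _ ts => 1 + (ts.attach.map (fun t => nodeCount t.1)).sum
decreasing_by
  all_goals simp_wf
  all_goals try omega
  all_goals (have := List.sizeOf_lt_of_mem t.2; omega)

/-- Arities are respected: every nonterminal node labeled `A` has exactly
`rank A` children. -/
inductive ArityOk (rank : N → ℕ) : PTree L N → Prop
  | leaf : ArityOk rank .leaf
  | param (i : ℕ) : ArityOk rank (.param i)
  | term (a : L) {l r : PTree L N} :
      ArityOk rank l → ArityOk rank r → ArityOk rank (.term a l r)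
  | nt (A : N) {ts : List (PTree L N)} :
      ts.length = rank A → (∀ t ∈ ts, ArityOk rank t) → ArityOk rank (.nt A ts)

/-- `Occurs B t` holds iff the nonterminal `B` occurs somewhere in `t`. -/
inductive Occurs (B : N) : PTree L N → Prop
  | here (ts : List (PTree L N)) : Occurs B (.nt B ts)
  | nt (A : N) {ts : List (PTree L N)} {t : PTree L N} :
      t ∈ ts → Occurs B t → Occurs B (.nt A ts)
  | term_left (a : L) {l r : PTree L N} : Occurs B l → Occurs B (.term a l r)
  | term_right (a : L) {l r : PTree L N} : Occurs B r → Occurs B (.term a l r)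

/-- Ground trees: binary trees built from terminal symbols and `_`-leaves only
(no nonterminals, no parameters). -/
inductive Ground : PTree L N → Prop
  | leaf : Ground .leaf
  | term (a : L) {l r : PTree L N} : Ground l → Ground r → Ground (.term a l r)

/-- Substitution of the parameters `y_1, …, y_k` by the trees of `env`
(`y_i` is replaced by the `i`-th entry of `env`). -/
def subst (env : List (PTree L N)) : PTree L N → PTree L N
  | .leaf => .leaf
  | .param i => env.getD (i - 1) .leaf
  | .term a l r => .term a (subst env l) (subst env r)
  | .nt B ts => .nt B (ts.attach.map (fun t => subst env t.1))
decreasing_by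
  all_goals simp_wf
  all_goals try omega
  all_goals (have := List.sizeOf_lt_of_mem t.2; omega)

end PTree

open PTree in
/-- A straight-line (linear) tree grammar `G = (N, S, P)`:
each nonterminal `A` of rank `k` has exactly one production `A → P A`, in whose
right-hand side the parameters `y_1, …, y_k` occur exactly once each and
in this order in pre-order, all arities are respected, and the hierarchical
order `H_G = {(A, B) | B occurs in P A}` is acyclic. -/
structure SLT (L N : Type) where
  rank : N → ℕ
  start : N
  P : N → PTree L N
  rank_start : rank start = 0
  arity : ∀ A, ArityOk rank (P A)
  params : ∀ A, paramList (P A) = List.range' 1 (rank A)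
  acyclic : ∀ A, ¬ Relation.TransGen (fun X Y => Occurs Y (P X)) A A

namespace SLT

variable {L N : Type}

/-- One derivation step: replace one occurrence of a subtree `A(t_1, …, t_k)`
(`A` a nonterminal) by `P A` with each parameter `y_i` replaced by `t_i`. -/
inductive Rw (G : SLT L N) : PTree L N → PTree L N → Prop
  | head (A : N) (ts : List (PTree L N)) :
      Rw G (.nt A ts) (PTree.subst ts (G.P A))
  | term_left {l l' : PTree L N} (a : L) (r : PTree L N) :
      Rw G l l' → Rw G (.term a l r) (.term a l' r)
  | term_right {r r' : PTree L N} (a : L) (l : PTree L N) :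
      Rw G r r' → Rw G (.term a l r) (.term a l r')
  | nt_child {t t' : PTree L N} (B : N) (u v : List (PTree L N)) :
      Rw G t t' → Rw G (.nt B (u ++ t :: v)) (.nt B (u ++ t' :: v))

/-- The size of a grammar: the sum of the numbers of edges of all
right-hand sides. -/
def size [Fintype N] (G : SLT L N) : ℕ :=
  ∑ A : N, (PTree.nodeCount (G.P A) - 1)

end SLT

/-- A straight-line program (SLP): a context-free string grammar over terminal
alphabet `Γ` with nonterminal set `V` in which every nonterminal `v` has
exactly one production `v → P v` and the derivation relation among
nonterminals is acyclic. -/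
structure SLP (Γ V : Type) where
  start : V
  P : V → List (Γ ⊕ V)
  acyclic : ∀ v, ¬ Relation.TransGen (fun x y => Sum.inr y ∈ P x) v v

namespace SLP

variable {Γ V : Type}

/-- One derivation step of an SLP: replace one occurrence of a nonterminal by
its right-hand side. -/
inductive Rw (H : SLP Γ V) : List (Γ ⊕ V) → List (Γ ⊕ V) → Prop
  | step (u : List (Γ ⊕ V)) (v : V) (w : List (Γ ⊕ V)) :
      Rw H (u ++ Sum.inr v :: w) (u ++ H.P v ++ w)

/-- The SLP generates the string `s` (the unique string derivable from its
start nonterminal). -/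
def Generates (H : SLP Γ V) (s : List Γ) : Prop :=
  Relation.ReflTransGen (Rw H) [Sum.inr H.start] (s.map Sum.inl)

/-- The size of an SLP: the total length of all right-hand sides. -/
def size [Fintype V] (H : SLP Γ V) : ℕ :=
  ∑ v : V, (H.P v).length

end SLP

/-- The serialization of a (ground) tree: the string of opening brackets
`<a>` (encoded `(a, false)`) and closing brackets `</a>` (encoded
`(a, true)`) produced by the depth-first left-to-right traversal, the
`_`-leaves contributing nothing. -/
def PTree.serialize {L N : Type} : PTree L N → List (L × Bool)
  | .leaf => []
  | .param _ => []
  | .term a l r => (a, false) :: (serialize l ++ serialize r ++ [(a, true)])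
  | .nt _ _ => []

namespace PTree

variable {L N : Type}

/-- The subtree of a (ground) tree rooted at a position
(`false` = left child, `true` = right child). -/
def subtreeAt : PTree L N → List Bool → PTree L N
  | t, [] => t
  | .term _ l r, b :: p => subtreeAt (if b then r else l) p
  | t, _ :: _ => t

/-- Whether a position is a node of a (ground) tree. -/
def ValidPos : PTree L N → List Bool → Prop
  | _, [] => True
  | .term _ l r, b :: p => ValidPos (if b then r else l) p
  | _, _ :: _ => False

end PTree

/-- Strict pre-order (document order) on positions of a binary tree: `u`
comes before `v` iff `u` is a proper prefix (ancestor) of `v`, or `u` lies in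
the left subtree and `v` in the right subtree of their common ancestor. -/
def preLt (u v : List Bool) : Prop :=
  (u <+: v ∧ u ≠ v) ∨ ∃ w x y, u = w ++ false :: x ∧ v = w ++ true :: y

section Aux
namespace PTree

variable {L N : Type}

@[simp] lemma paramList_leaf : (PTree.leaf : PTree L N).paramList = [] := by
  simp [PTree.paramList]

@[simp] lemma paramList_param (i : ℕ) : (PTree.param i : PTree L N).paramList = [i] := by
  simp [PTree.paramList]

@[simp] lemma paramList_term (a : L) (l r : PTree L N) :
    (PTree.term a l r).paramList = l.paramList ++ r.paramList := by
  rw [PTree.paramList]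

@[simp] lemma paramList_nt (B : N) (ts : List (PTree L N)) :
    (PTree.nt B ts).paramList = (ts.map PTree.paramList).flatten := by
  rw [PTree.paramList, List.attach_map_val]

@[simp] lemma nodeCount_leaf : (PTree.leaf : PTree L N).nodeCount = 1 := by
  simp [PTree.nodeCount]

@[simp] lemma nodeCount_param (i : ℕ) : (PTree.param i : PTree L N).nodeCount = 1 := by
  simp [PTree.nodeCount]

@[simp] lemma nodeCount_term (a : L) (l r : PTree L N) :
    (PTree.term a l r).nodeCount = 1 + l.nodeCount + r.nodeCount := by
  rw [PTree.nodeCount]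

@[simp] lemma nodeCount_nt (B : N) (ts : List (PTree L N)) :
    (PTree.nt B ts).nodeCount = 1 + (ts.map PTree.nodeCount).sum := by
  rw [PTree.nodeCount, List.attach_map_val]

@[simp] lemma subst_leaf (env : List (PTree L N)) : PTree.subst env (.leaf) = .leaf := by
  rw [PTree.subst]

@[simp] lemma subst_param (env : List (PTree L N)) (i : ℕ) :
    PTree.subst env (.param i) = env.getD (i - 1) .leaf := by
  rw [PTree.subst]

@[simp] lemma subst_term (env : List (PTree L N)) (a : L) (l r : PTree L N) :
    PTree.subst env (.term a l r) = .term a (PTree.subst env l) (PTree.subst env r) := by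
  rw [PTree.subst]

@[simp] lemma subst_nt (env : List (PTree L N)) (B : N) (ts : List (PTree L N)) :
    PTree.subst env (.nt B ts) = .nt B (ts.map (PTree.subst env)) := by
  rw [PTree.subst, List.attach_map_val]

/-- Custom induction principle for `PTree`. -/
lemma myrec {motive : PTree L N → Prop} (h1 : motive .leaf) (h2 : ∀ i, motive (.param i))
    (h3 : ∀ a l r, motive l → motive r → motive (.term a l r))
    (h4 : ∀ B ts, (∀ t ∈ ts, motive t) → motive (.nt B ts)) : ∀ t, motive t
  | .leaf => h1
  | .param i => h2 i
  | .term a l r => h3 a l r (myrec h1 h2 h3 h4 l) (myrec h1 h2 h3 h4 r)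
  | .nt B ts => h4 B ts (fun u hu => myrec h1 h2 h3 h4 u)
decreasing_by
  all_goals simp_wf
  all_goals try omega
  all_goals (have := List.sizeOf_lt_of_mem hu; omega)

lemma subst_of_paramList_nil (env : List (PTree L N)) :
    ∀ t : PTree L N, t.paramList = [] → PTree.subst env t = t := by
  intro t
  induction t using myrec with
  | h1 => simp
  | h2 i => simp
  | h3 a l r ihl ihr =>
      simp only [paramList_term, List.append_eq_nil_iff, subst_term]
      rintro ⟨h1, h2⟩
      rw [ihl h1, ihr h2]
  | h4 B ts ih =>
      simp only [paramList_nt, subst_nt, List.flatten_eq_nil_iff, List.mem_map]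
      intro h
      congr 1
      rw [List.map_congr_left (g := id) (fun u hu => ih u hu (h _ ⟨u, hu, rfl⟩)), List.map_id]

end PTree
end Aux

namespace PTree

variable {L N : Type}

/-- Replace every nonterminal node by `g` of its label. -/
def expandT (g : N → PTree L N) : PTree L N → PTree L N
  | .leaf => .leaf
  | .param i => .param i
  | .term a l r => .term a (expandT g l) (expandT g r)
  | .nt B _ => g B

/-- The list of "serialization-relevant" subtrees (not descending into
nonterminal nodes). -/
def subT : PTree L N → List (PTree L N)
  | .term a l r => .term a l r :: (subT l ++ subT r)
  | t => [t]

@[simp] lemma subT_term (a : L) (l r : PTree L N) :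
    (PTree.term a l r).subT = .term a l r :: (l.subT ++ r.subT) := rfl

@[simp] lemma subtreeAt_nil (t : PTree L N) : t.subtreeAt [] = t := by
  cases t <;> rfl

lemma self_mem_subT (t : PTree L N) : t ∈ t.subT := by
  cases t <;> simp [subT]

lemma subT_subset {t u : PTree L N} (h : u ∈ t.subT) : u.subT ⊆ t.subT := by
  induction t using myrec
  case h3 a l r ihl ihr =>
      rcases (by simpa using h : u = .term a l r ∨ u ∈ l.subT ∨ u ∈ r.subT) with h | h | h
      · subst h; exact fun x hx => hx
      · intro x hx; simp [List.subset_def.1 (ihl h) hx]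
      · intro x hx; simp [List.subset_def.1 (ihr h) hx]
  all_goals (simp [subT] at h; subst h; exact fun x hx => hx)

lemma occurs_of_mem_subT {t u : PTree L N} {B : N} (h : u ∈ t.subT) (ho : Occurs B u) :
    Occurs B t := by
  induction t using myrec
  case h3 a l r ihl ihr =>
      rcases (by simpa using h : u = .term a l r ∨ u ∈ l.subT ∨ u ∈ r.subT) with h | h | h
      · subst h; exact ho
      · exact Occurs.term_left a (ihl h)
      · exact Occurs.term_right a (ihr h)
  all_goals (simp [subT] at h; subst h; exact ho)

lemma sizeOf_le_of_mem_subT {t u : PTree L N} (h : u ∈ t.subT) : sizeOf u ≤ sizeOf t := by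
  induction t using myrec
  case h3 a l r ihl ihr =>
      rcases (by simpa using h : u = .term a l r ∨ u ∈ l.subT ∨ u ∈ r.subT) with h | h | h
      · subst h; exact le_refl _
      · have := ihl h; simp only [PTree.term.sizeOf_spec]; omega
      · have := ihr h; simp only [PTree.term.sizeOf_spec]; omega
  all_goals (simp [subT] at h; subst h; exact le_refl _)

lemma mem_subT_of_child_left {t : PTree L N} {a : L} {l r : PTree L N}
    (h : PTree.term a l r ∈ t.subT) : l ∈ t.subT :=
  subT_subset h (by simp [self_mem_subT])

lemma mem_subT_of_child_right {t : PTree L N} {a : L} {l r : PTree L N}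
    (h : PTree.term a l r ∈ t.subT) : r ∈ t.subT :=
  subT_subset h (by simp [self_mem_subT])

lemma occurs_of_nt_mem_subT {t : PTree L N} {B : N} {ts : List (PTree L N)}
    (h : PTree.nt B ts ∈ t.subT) : Occurs B t :=
  occurs_of_mem_subT h (Occurs.here ts)

@[simp] lemma serialize_expandT_param (g : N → PTree L N) (i : ℕ) :
    (expandT g (.param i)).serialize = [] := rfl

lemma one_le_nodeCount (t : PTree L N) : 1 ≤ t.nodeCount := by
  induction t using myrec <;> simp <;> omega

/-- Cost of serialization productions over the subtree list. -/
lemma subT_cost_le (t : PTree L N) (f : PTree L N → ℕ)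
    (h0 : ∀ u : PTree L N, (∀ a l r, u ≠ PTree.term a l r) → f u = 0)
    (h4 : ∀ (a : L) (l r : PTree L N), f (.term a l r) ≤ 4) :
    (t.subT.map f).sum ≤ 2 * (t.nodeCount - 1) := by
  induction t using myrec
  case h3 a l r ihl ihr =>
      have h1 := h4 a l r
      have hl1 := one_le_nodeCount l
      have hr1 := one_le_nodeCount r
      simp only [subT_term, List.map_cons, List.map_append, List.sum_cons, List.sum_append,
        nodeCount_term]
      omega
  case h1 => simp [subT, h0 PTree.leaf (by intro a l r h; cases h)]
  case h2 i => simp [subT, h0 (PTree.param i) (by intro a l r h; cases h)]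
  case h4 B ts _ => simp [subT, h0 (PTree.nt B ts) (by intro a l r h; cases h)]

end PTree

section SLPAux

variable {Γ V : Type}

lemma wf_of_acyclic [Finite V] (r : V → V → Prop) (h : ∀ v, ¬ Relation.TransGen r v v) :
    WellFounded (Function.swap r) := by
  have ht : IsTrans V (Relation.TransGen (Function.swap r)) := inferInstance
  have hi : IsIrrefl V (Relation.TransGen (Function.swap r)) :=
    ⟨fun v hv => h v (Relation.transGen_swap.1 hv)⟩
  exact Subrelation.wf (fun {x y} hxy => Relation.TransGen.single hxy)
    (Finite.wellFounded_of_trans_of_irrefl _)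

namespace SLP

lemma wfEdge [Finite V] (H : SLP Γ V) :
    WellFounded (fun w v => Sum.inr w ∈ H.P v) :=
  wf_of_acyclic _ H.acyclic

/-- The unique string generated from a nonterminal. -/
noncomputable def value [Finite V] (H : SLP Γ V) : V → List Γ :=
  H.wfEdge.fix fun v ih =>
    ((H.P v).attach.map fun x =>
      match x with
      | ⟨Sum.inl a, _⟩ => [a]
      | ⟨Sum.inr w, h⟩ => ih w h).flatten

lemma value_eq [Finite V] (H : SLP Γ V) (v : V) :
    H.value v = ((H.P v).map (Sum.elim (fun a => [a]) H.value)).flatten := by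
  rw [value, WellFounded.fix_eq]
  congr 1
  rw [← List.attach_map_val (l := H.P v) (f := Sum.elim (fun a => [a]) (H.wfEdge.fix _))]
  apply List.map_congr_left
  rintro ⟨x, hx⟩ _
  cases x <;> rfl

lemma rw_append {H : SLP Γ V} {xs ys : List (Γ ⊕ V)} (h : SLP.Rw H xs ys)
    (a b : List (Γ ⊕ V)) : SLP.Rw H (a ++ xs ++ b) (a ++ ys ++ b) := by
  obtain ⟨u, v, w⟩ := h
  have := SLP.Rw.step (H := H) (a ++ u) v (w ++ b)
  simpa using this

lemma rtg_append {H : SLP Γ V} {xs ys : List (Γ ⊕ V)}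
    (h : Relation.ReflTransGen (SLP.Rw H) xs ys) (a b : List (Γ ⊕ V)) :
    Relation.ReflTransGen (SLP.Rw H) (a ++ xs ++ b) (a ++ ys ++ b) := by
  induction h with
  | refl => exact Relation.ReflTransGen.refl
  | tail _ h2 ih => exact Relation.ReflTransGen.tail ih (rw_append h2 a b)

lemma derive_list [Finite V] (H : SLP Γ V) (xs : List (Γ ⊕ V))
    (hx : ∀ w, Sum.inr w ∈ xs →
      Relation.ReflTransGen (SLP.Rw H) [Sum.inr w] ((H.value w).map Sum.inl)) :
    Relation.ReflTransGen (SLP.Rw H) xs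
      (((xs.map (Sum.elim (fun a => [a]) H.value)).flatten).map Sum.inl) := by
  induction xs with
  | nil => exact Relation.ReflTransGen.refl
  | cons x xs ih =>
      have ih' := ih (fun w hw => hx w (by simp [hw]))
      cases x with
      | inl a =>
          have := rtg_append ih' [Sum.inl a] []
          simpa using this
      | inr w =>
          have h1 := rtg_append (hx w (by simp)) [] xs
          have h2 := rtg_append ih' ((H.value w).map Sum.inl) []
          simp only [List.nil_append, List.append_nil] at h1 h2
          refine Relation.ReflTransGen.trans (by simpa using h1) ?_
          simpa using h2

lemma derive [Finite V] (H : SLP Γ V) (v : V) :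
    Relation.ReflTransGen (SLP.Rw H) [Sum.inr v] ((H.value v).map Sum.inl) := by
  induction v using H.wfEdge.induction with
  | _ v ih =>
      have h1 : SLP.Rw H [Sum.inr v] (H.P v) := by
        have := SLP.Rw.step (H := H) [] v []
        simpa using this
      refine Relation.ReflTransGen.head h1 ?_
      rw [value_eq]
      exact derive_list H (H.P v) (fun w hw => ih w hw)

lemma generates_value [Finite V] (H : SLP Γ V) : H.Generates (H.value H.start) :=
  derive H H.start

/-- Transport an SLP along an equivalence of nonterminal types. -/
def mapV {V' : Type} (e : V ≃ V') (H : SLP Γ V) : SLP Γ V' where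
  start := e H.start
  P := fun v' => (H.P (e.symm v')).map (Sum.map id e)
  acyclic := by
    intro v' hv'
    have key : ∀ x' y' : V', Sum.inr y' ∈ (H.P (e.symm x')).map (Sum.map id e) →
        Sum.inr (e.symm y') ∈ H.P (e.symm x') := by
      intro x' y' h
      rcases List.mem_map.1 h with ⟨z, hz, hz2⟩
      cases z with
      | inl a => simp [Sum.map] at hz2
      | inr w =>
          simp only [Sum.map, Sum.elim_inr, Function.comp_apply, Sum.inr.injEq] at hz2
          have : e.symm y' = w := by rw [← hz2]; simp
          rw [this]; exact hz
    have : ∀ a b : V', Relation.TransGen (fun x y => Sum.inr y ∈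
        (H.P (e.symm x)).map (Sum.map id e)) a b →
        Relation.TransGen (fun x y => Sum.inr y ∈ H.P x) (e.symm a) (e.symm b) := by
      intro a b h
      induction h with
      | single h => exact Relation.TransGen.single (key _ _ h)
      | tail _ h2 ih => exact Relation.TransGen.tail ih (key _ _ h2)
    exact H.acyclic (e.symm v') (this v' v' hv')

lemma mapV_rw {V' : Type} (e : V ≃ V') (H : SLP Γ V) {xs ys : List (Γ ⊕ V)}
    (h : SLP.Rw H xs ys) :
    SLP.Rw (H.mapV e) (xs.map (Sum.map id e)) (ys.map (Sum.map id e)) := by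
  obtain ⟨u, v, w⟩ := h
  have := SLP.Rw.step (H := H.mapV e) (u.map (Sum.map id e)) (e v) (w.map (Sum.map id e))
  simpa [mapV, Sum.map] using this

lemma mapV_generates {V' : Type} (e : V ≃ V') (H : SLP Γ V) {s : List Γ}
    (h : H.Generates s) : (H.mapV e).Generates s := by
  unfold Generates at h ⊢
  have key : ∀ xs ys, Relation.ReflTransGen (SLP.Rw H) xs ys →
      Relation.ReflTransGen (SLP.Rw (H.mapV e)) (xs.map (Sum.map id e))
        (ys.map (Sum.map id e)) := by
    intro xs ys h
    induction h with
    | refl => exact Relation.ReflTransGen.refl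
    | tail _ h2 ih => exact Relation.ReflTransGen.tail ih (mapV_rw e H h2)
  have := key _ _ h
  simpa [mapV, Sum.map, List.map_map, Function.comp] using this

lemma mapV_size {V' : Type} [Fintype V] [Fintype V'] (e : V ≃ V') (H : SLP Γ V) :
    (H.mapV e).size = H.size := by
  unfold size mapV
  simp only [List.length_map]
  exact Fintype.sum_equiv e.symm _ _ (fun v' => rfl)

end SLP
end SLPAux

section GrammarAux
open PTree

variable {L N : Type}

namespace SLT

lemma wfN [Finite N] (G : SLT L N) :
    WellFounded (fun B A => Occurs B (G.P A)) :=
  wf_of_acyclic _ G.acyclic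

open Classical in
/-- Number of strict descendants of a nonterminal in the DAG order. -/
noncomputable def d [Fintype N] (G : SLT L N) (A : N) : ℕ :=
  (Finset.univ.filter
    (fun C => Relation.TransGen (fun X Y => Occurs Y (G.P X)) A C)).card

open Classical in
lemma d_lt [Fintype N] (G : SLT L N) {A B : N} (h : Occurs B (G.P A)) :
    G.d B < G.d A := by
  unfold d
  apply Finset.card_lt_card
  rw [Finset.ssubset_def]
  constructor
  · intro C hC
    simp only [Finset.mem_filter, Finset.mem_univ, true_and] at hC ⊢
    exact Relation.TransGen.head h hC
  · intro hsub
    have hB : B ∈ Finset.univ.filter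
        (fun C => Relation.TransGen (fun X Y => Occurs Y (G.P X)) A C) := by
      simp only [Finset.mem_filter, Finset.mem_univ, true_and]
      exact Relation.TransGen.single h
    have := hsub hB
    simp only [Finset.mem_filter, Finset.mem_univ, true_and] at this
    exact G.acyclic B this

open Classical in
/-- The tree derived from a nonterminal. -/
noncomputable def expandN [Finite N] (G : SLT L N) : N → PTree L N :=
  G.wfN.fix fun A ih =>
    expandT (fun B => if h : Occurs B (G.P A) then ih B h else .leaf) (G.P A)

lemma expandT_congr {g g' : N → PTree L N} :
    ∀ u : PTree L N, (∀ B, Occurs B u → g B = g' B) → expandT g u = expandT g' u := by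
  intro u
  induction u using PTree.myrec with
  | h1 => intro _; rfl
  | h2 i => intro _; rfl
  | h3 a l r ihl ihr =>
      intro h
      simp only [expandT]
      rw [ihl (fun B hB => h B (Occurs.term_left a hB)),
        ihr (fun B hB => h B (Occurs.term_right a hB))]
  | h4 B ts _ =>
      intro h
      simp only [expandT]
      exact h B (Occurs.here ts)

lemma expandN_eq [Finite N] (G : SLT L N) (A : N) :
    G.expandN A = expandT G.expandN (G.P A) := by
  classical
  rw [expandN, WellFounded.fix_eq]
  exact expandT_congr _ (fun B hB => by rw [dif_pos hB])

lemma paramList_P_nil [Finite N] (G : SLT L N) (h0 : ∀ A, G.rank A = 0) (A : N) :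
    (G.P A).paramList = [] := by
  rw [G.params A, h0 A]
  rfl

lemma expandT_rw [Finite N] {G : SLT L N} (h0 : ∀ A, G.rank A = 0)
    {u v : PTree L N} (h : SLT.Rw G u v) :
    expandT G.expandN u = expandT G.expandN v := by
  induction h with
  | head A ts =>
      rw [PTree.subst_of_paramList_nil _ _ (G.paramList_P_nil h0 A)]
      show G.expandN A = expandT G.expandN (G.P A)
      exact G.expandN_eq A
  | term_left a r _ ih => simp only [expandT]; rw [ih]
  | term_right a l _ ih => simp only [expandT]; rw [ih]
  | nt_child B u' v' _ _ => rfl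

lemma expandT_ground {g : N → PTree L N} {t : PTree L N} (h : Ground t) :
    expandT g t = t := by
  induction h with
  | leaf => rfl
  | term a hl hr ihl ihr => simp only [expandT]; rw [ihl, ihr]

lemma expandT_rtg [Finite N] {G : SLT L N} (h0 : ∀ A, G.rank A = 0)
    {u v : PTree L N} (h : Relation.ReflTransGen (SLT.Rw G) u v) :
    expandT G.expandN u = expandT G.expandN v := by
  induction h with
  | refl => rfl
  | tail _ h2 ih => rw [ih, expandT_rw h0 h2]

lemma ground_eq_expand [Finite N] {G : SLT L N} (h0 : ∀ A, G.rank A = 0)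
    {t : PTree L N} (hg : Ground t)
    (hr : Relation.ReflTransGen (SLT.Rw G) (G.P G.start) t) :
    t = expandT G.expandN (G.P G.start) := by
  rw [expandT_rtg h0 hr, expandT_ground hg]

end SLT
end GrammarAux

section LocAux
open PTree

variable {L N : Type}

namespace PTree

lemma subT_length_pos (t : PTree L N) : 0 < t.subT.length :=
  List.length_pos_iff.2 (by intro h; have := self_mem_subT t; simp [h] at this)

lemma subT_get_zero (t : PTree L N) (h : 0 < t.subT.length) : t.subT.get ⟨0, h⟩ = t := by
  cases t <;> rfl

end PTree

namespace SLT

variable [Fintype N] (G : SLT L N)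

open Classical in
/-- Locate the subtree (as a node of some right-hand side) at position `p`. -/
noncomputable def loc {L N : Type} [Fintype N] (G : SLT L N) :
    N → PTree L N → List Bool → N × PTree L N
  | A, .term a l r, [] => (A, .term a l r)
  | A, .term _ l r, b :: p' => loc G A (if b then r else l) p'
  | A, .nt B ts, p =>
      if h : Occurs B (G.P A) then loc G B (G.P B) p else (A, .nt B ts)
  | A, u, _ => (A, u)
termination_by A u _ => (G.d A, sizeOf u)
decreasing_by
  · apply Prod.Lex.right
    cases b <;> simp <;> omega
  · exact Prod.Lex.left _ _ (G.d_lt h)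

lemma loc_mem (A : N) (u : PTree L N) (p : List Bool) :
    u ∈ (G.P A).subT → (G.loc A u p).2 ∈ (G.P (G.loc A u p).1).subT := by
  induction A, u, p using SLT.loc.induct (G := G) with
  | case1 A a l r => intro hm; simp only [SLT.loc]; exact hm
  | case2 A a l r b p' ih =>
      intro hm
      simp only [SLT.loc]
      cases b
      · simp only [Bool.false_eq_true, if_false, dite_eq_ite] at ih ⊢
        exact ih (mem_subT_of_child_left hm)
      · simp only [if_true, dite_eq_ite] at ih ⊢
        exact ih (mem_subT_of_child_right hm)
  | case3 A B ts p h ih =>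
      intro _
      simp only [SLT.loc, dif_pos h]
      exact ih (self_mem_subT _)
  | case4 A B ts p h =>
      intro hm
      simp only [SLT.loc, dif_neg h]
      exact hm
  | case5 A u x h1 h2 h3 =>
      intro hm
      cases u with
      | leaf => simp only [SLT.loc]; exact hm
      | param i => simp only [SLT.loc]; exact hm
      | term a l r => cases x with
          | nil => exact absurd rfl (fun h => h1 a l r h rfl)
          | cons b p' => exact absurd rfl (fun h => h2 a l r b p' h rfl)
      | nt B ts => exact absurd rfl (fun h => h3 B ts h)

lemma loc_spec (A : N) (u : PTree L N) (p : List Bool) :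
    u ∈ (G.P A).subT → ValidPos (expandT G.expandN u) p →
    (expandT G.expandN u).subtreeAt p = expandT G.expandN (G.loc A u p).2 := by
  induction A, u, p using SLT.loc.induct (G := G) with
  | case1 A a l r => intro _ _; simp only [SLT.loc, subtreeAt_nil]
  | case2 A a l r b p' ih =>
      intro hm hv
      simp only [SLT.loc]
      cases b
      · simp only [Bool.false_eq_true, if_false, dite_eq_ite] at ih ⊢
        have hv' : ValidPos (expandT G.expandN l) p' := by
          simpa [expandT, PTree.ValidPos] using hv
        have := ih (mem_subT_of_child_left hm) hv'
        simpa [expandT, PTree.subtreeAt] using this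
      · simp only [if_true, dite_eq_ite] at ih ⊢
        have hv' : ValidPos (expandT G.expandN r) p' := by
          simpa [expandT, PTree.ValidPos] using hv
        have := ih (mem_subT_of_child_right hm) hv'
        simpa [expandT, PTree.subtreeAt] using this
  | case3 A B ts p h ih =>
      intro _ hv
      simp only [SLT.loc, dif_pos h]
      have he : expandT G.expandN (PTree.nt B ts) = expandT G.expandN (G.P B) := by
        show G.expandN B = _
        exact G.expandN_eq B
      rw [he] at hv ⊢
      exact ih (self_mem_subT _) hv
  | case4 A B ts p h =>
      intro hm hv
      exact absurd (occurs_of_nt_mem_subT hm) h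
  | case5 A u x h1 h2 h3 =>
      intro hm hv
      cases u with
      | leaf => cases x with
          | nil => simp only [SLT.loc, subtreeAt_nil]
          | cons b p' => exact absurd hv (by simp [expandT, PTree.ValidPos])
      | param i => cases x with
          | nil => simp only [SLT.loc, subtreeAt_nil]
          | cons b p' => exact absurd hv (by simp [expandT, PTree.ValidPos])
      | term a l r => cases x with
          | nil => exact absurd rfl (fun h => h1 a l r h rfl)
          | cons b p' => exact absurd rfl (fun h => h2 a l r b p' h rfl)
      | nt B ts => exact absurd rfl (fun h => h3 B ts h)

end SLT
end LocAux

section Construction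
open PTree

namespace SLTSLP

variable {L N : Type}

/-- Nonterminals of the constructed SLP. -/
abbrev V0 {L N : Type} (G : SLT L N) : Type :=
  Unit ⊕ Σ A : N, Fin (G.P A).subT.length

noncomputable instance instFintypeV0 [Fintype N] (G : SLT L N) : Fintype (V0 G) := by
  classical exact inferInstance

open Classical in
/-- Chase chains of nonterminals. -/
noncomputable def chase [Fintype N] (G : SLT L N) (B : N) :
    Σ A : N, Fin (G.P A).subT.length :=
  match h : G.P B with
  | .nt C _ => chase G C
  | _ => ⟨B, ⟨0, subT_length_pos _⟩⟩
termination_by G.d B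
decreasing_by exact G.d_lt (by rw [h]; exact Occurs.here _)

open Classical in
noncomputable def idxOf [Fintype N] (G : SLT L N) (A : N) (x : PTree L N) :
    Fin (G.P A).subT.length :=
  letI := Classical.decEq (PTree L N)
  if h : x ∈ (G.P A).subT then ⟨List.idxOf x _, List.idxOf_lt_length_iff.2 h⟩
  else ⟨0, subT_length_pos _⟩

open Classical in
lemma get_idxOf [Fintype N] (G : SLT L N) (A : N) (x : PTree L N)
    (h : x ∈ (G.P A).subT) : (G.P A).subT.get (idxOf G A x) = x := by
  letI := Classical.decEq (PTree L N)
  simp only [idxOf]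
  rw [dif_pos h]
  exact List.getElem_idxOf _

/-- Reference to the SLP nonterminal generating the serialization of the
expansion of a node. -/
noncomputable def refV [Fintype N] (G : SLT L N) (A : N) : PTree L N → V0 G
  | .nt B _ => Sum.inr (chase G B)
  | x => Sum.inr ⟨A, idxOf G A x⟩

/-- Right-hand sides of the constructed SLP. -/
noncomputable def prod0 [Fintype N] (G : SLT L N) (rs : List (List Bool)) :
    V0 G → List ((L × Bool) ⊕ V0 G)
  | Sum.inl _ => rs.map fun p =>
      Sum.inr (refV G (G.loc G.start (G.P G.start) p).1 (G.loc G.start (G.P G.start) p).2)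
  | Sum.inr ⟨A, i⟩ =>
      match (G.P A).subT.get i with
      | .term a l r =>
          [Sum.inl (a, false), Sum.inr (refV G A l), Sum.inr (refV G A r),
           Sum.inl (a, true)]
      | _ => []

end SLTSLP
end Construction

section Measure
open PTree

namespace SLTSLP

variable {L N : Type}

noncomputable def KK [Fintype N] (G : SLT L N) : ℕ :=
  Finset.univ.sup fun A => sizeOf (G.P A)

noncomputable def DD [Fintype N] (G : SLT L N) : ℕ :=
  Finset.univ.sup G.d

lemma sizeOf_P_le [Fintype N] (G : SLT L N) (A : N) : sizeOf (G.P A) ≤ KK G :=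
  Finset.le_sup (f := fun A => sizeOf (G.P A)) (Finset.mem_univ A)

lemma d_le [Fintype N] (G : SLT L N) (A : N) : G.d A ≤ DD G :=
  Finset.le_sup (f := G.d) (Finset.mem_univ A)

noncomputable def mu [Fintype N] (G : SLT L N) : V0 G → ℕ
  | Sum.inl _ => (DD G + 1) * (KK G + 1)
  | Sum.inr ⟨A, i⟩ => G.d A * (KK G + 1) + sizeOf ((G.P A).subT.get i)

lemma mu_chase [Fintype N] (G : SLT L N) (B : N) :
    mu G (Sum.inr (chase G B)) ≤ G.d B * (KK G + 1) + KK G := by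
  induction B using G.wfN.induction with
  | _ B ih =>
    rw [chase.eq_def]
    split
    · next C ts heq =>
        have hC : Occurs C (G.P B) := by rw [heq]; exact Occurs.here _
        have h1 := ih C hC
        have h2 := G.d_lt hC
        calc mu G (Sum.inr (chase G C)) ≤ G.d C * (KK G + 1) + KK G := h1
          _ ≤ G.d B * (KK G + 1) + KK G := by
              have : G.d C ≤ G.d B := le_of_lt h2
              nlinarith
    · next =>
        simp only [mu, subT_get_zero]
        have := sizeOf_P_le G B
        omega

lemma mu_refV [Fintype N] (G : SLT L N) (A : N) (x : PTree L N)
    (h : x ∈ (G.P A).subT) : mu G (refV G A x) ≤ G.d A * (KK G + 1) + sizeOf x := by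
  cases x with
  | nt B ts =>
      have hB : Occurs B (G.P A) := occurs_of_nt_mem_subT h
      have h1 := mu_chase G B
      have h2 := G.d_lt hB
      refine le_trans ?_ (Nat.le_add_right (G.d A * (KK G + 1)) _)
      have e1 : mu G (refV G A (.nt B ts)) = mu G (Sum.inr (chase G B)) := rfl
      rw [e1]
      have h3 : G.d B + 1 ≤ G.d A := h2
      have h4 : (G.d B + 1) * (KK G + 1) ≤ G.d A * (KK G + 1) :=
        Nat.mul_le_mul_right _ h3
      nlinarith
  | leaf =>
      simp only [refV, mu, get_idxOf G A _ h]
      exact le_refl _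
  | param i =>
      simp only [refV, mu, get_idxOf G A _ h]
      exact le_refl _
  | term a l r =>
      simp only [refV, mu, get_idxOf G A _ h]
      exact le_refl _

lemma edge_mu [Fintype N] (G : SLT L N) (rs : List (List Bool)) (v w : V0 G)
    (h : Sum.inr w ∈ prod0 G rs v) : mu G w < mu G v := by
  cases v with
  | inl u =>
      simp only [prod0, List.mem_map] at h
      obtain ⟨p, -, hp⟩ := h
      have hw : refV G (G.loc G.start (G.P G.start) p).1
          (G.loc G.start (G.P G.start) p).2 = w := by
        injection hp
      subst hw
      have hm := G.loc_mem G.start (G.P G.start) p (self_mem_subT _)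
      have h1 := mu_refV G _ _ hm
      have h2 := sizeOf_le_of_mem_subT hm
      have h3 := sizeOf_P_le G (G.loc G.start (G.P G.start) p).1
      have h4 := d_le G (G.loc G.start (G.P G.start) p).1
      have h5 : G.d (G.loc G.start (G.P G.start) p).1 * (KK G + 1)
          ≤ DD G * (KK G + 1) := Nat.mul_le_mul_right _ h4
      have h6 : mu G (Sum.inl u) = (DD G + 1) * (KK G + 1) := rfl
      rw [h6]
      nlinarith
  | inr s =>
      obtain ⟨A, i⟩ := s
      have hgm : (G.P A).subT.get i ∈ (G.P A).subT := List.get_mem _ i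
      simp only [prod0] at h
      split at h
      · next a l r hu =>
          rw [hu] at hgm
          have hl : l ∈ (G.P A).subT := mem_subT_of_child_left hgm
          have hr : r ∈ (G.P A).subT := mem_subT_of_child_right hgm
          have hs : sizeOf l < sizeOf (PTree.term a l r) ∧
              sizeOf r < sizeOf (PTree.term a l r) := by
            constructor <;> (simp only [PTree.term.sizeOf_spec]; omega)
          simp only [List.mem_cons, List.not_mem_nil, or_false,
            List.mem_singleton] at h
          rcases h with h | h | h | h
          · cases h
          · have hwl : refV G A l = w := by injection h.symm
            subst hwl
            refine lt_of_le_of_lt (mu_refV G A l hl) ?_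
            simp only [mu]
            rw [hu]
            omega
          · have hwr : refV G A r = w := by injection h.symm
            subst hwr
            refine lt_of_le_of_lt (mu_refV G A r hr) ?_
            simp only [mu]
            rw [hu]
            omega
          · cases h
      · next => cases h

/-- The constructed SLP. -/
noncomputable def H0 [Fintype N] (G : SLT L N) (rs : List (List Bool)) :
    SLP (L × Bool) (V0 G) where
  start := Sum.inl ()
  P := prod0 G rs
  acyclic := by
    intro v hv
    have key : ∀ a b : V0 G, Relation.TransGen
        (fun x y => Sum.inr y ∈ prod0 G rs x) a b → mu G b < mu G a := by
      intro a b h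
      induction h with
      | single h => exact edge_mu G rs _ _ h
      | tail _ h2 ih => exact lt_trans (edge_mu G rs _ _ h2) ih
    exact lt_irrefl _ (key v v hv)

end SLTSLP
end Measure

section Value
open PTree

namespace SLTSLP

variable {L N : Type}

lemma value_refV [Fintype N] (G : SLT L N) (rs : List (List Bool)) :
    ∀ v : V0 G, ∀ (A : N) (x : PTree L N), x ∈ (G.P A).subT → refV G A x = v →
    (H0 G rs).value v = (expandT G.expandN x).serialize := by
  intro v
  induction v using (H0 G rs).wfEdge.induction with
  | _ v ih =>
    intro A x hm hv
    cases x with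
    | leaf =>
        subst hv
        rw [SLP.value_eq]
        have hp : (H0 G rs).P (refV G A .leaf) = [] := by
          show prod0 G rs (Sum.inr ⟨A, idxOf G A .leaf⟩) = []
          simp only [prod0]
          rw [get_idxOf G A _ hm]
        rw [hp]
        rfl
    | param j =>
        subst hv
        rw [SLP.value_eq]
        have hp : (H0 G rs).P (refV G A (.param j)) = [] := by
          show prod0 G rs (Sum.inr ⟨A, idxOf G A (.param j)⟩) = []
          simp only [prod0]
          rw [get_idxOf G A _ hm]
        rw [hp]
        rfl
    | term a l r =>
        subst hv
        have hgl : l ∈ (G.P A).subT := mem_subT_of_child_left hm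
        have hgr : r ∈ (G.P A).subT := mem_subT_of_child_right hm
        have hp : (H0 G rs).P (refV G A (.term a l r)) =
            [Sum.inl (a, false), Sum.inr (refV G A l), Sum.inr (refV G A r),
             Sum.inl (a, true)] := by
          show prod0 G rs (Sum.inr ⟨A, idxOf G A (.term a l r)⟩) = _
          simp only [prod0]
          rw [get_idxOf G A _ hm]
        have ihl := ih (refV G A l) (by rw [hp]; simp) A l hgl rfl
        have ihr := ih (refV G A r) (by rw [hp]; simp) A r hgr rfl
        rw [SLP.value_eq, hp]
        simp only [List.map_cons, List.map_nil, Sum.elim_inl, Sum.elim_inr,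
          List.flatten, ihl, ihr]
        show (a, false) :: ((expandT G.expandN l).serialize ++
            ((expandT G.expandN r).serialize ++ ([(a, true)] ++ []))) = _
        simp [expandT, PTree.serialize]
    | nt B ts =>
        have claim : ∀ B' : N, Sum.inr (chase G B') = v →
            (H0 G rs).value v = (G.expandN B').serialize := by
          intro B'
          induction B' using G.wfN.induction with
          | _ B' ihB =>
            intro hv'
            rw [chase.eq_def] at hv'
            split at hv'
            · next C ts' heq =>
                have h1 := ihB C (by rw [heq]; exact Occurs.here _) hv'
                rw [h1, G.expandN_eq B', heq]
                rfl
            · next hne =>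
                subst hv'
                rw [SLP.value_eq]
                show (List.map _ (prod0 G rs (Sum.inr ⟨B', ⟨0, _⟩⟩))).flatten = _
                simp only [prod0]
                rw [subT_get_zero]
                rw [G.expandN_eq B']
                split
                · next a l r heq2 =>
                    have hmm : (PTree.term a l r) ∈ (G.P B').subT := by
                      rw [← heq2]; exact self_mem_subT _
                    have hgl : l ∈ (G.P B').subT := mem_subT_of_child_left hmm
                    have hgr : r ∈ (G.P B').subT := mem_subT_of_child_right hmm
                    have hedge : ∀ w : V0 G, w = refV G B' l ∨ w = refV G B' r →
                        Sum.inr w ∈ (H0 G rs).P (Sum.inr ⟨B', ⟨0, subT_length_pos _⟩⟩) := by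
                      intro w hw
                      show Sum.inr w ∈ prod0 G rs (Sum.inr ⟨B', ⟨0, subT_length_pos _⟩⟩)
                      simp only [prod0]
                      rw [subT_get_zero, heq2]
                      rcases hw with rfl | rfl <;> simp
                    have ihl := ih (refV G B' l) (hedge _ (Or.inl rfl)) B' l hgl rfl
                    have ihr := ih (refV G B' r) (hedge _ (Or.inr rfl)) B' r hgr rfl
                    rw [heq2]
                    simp only [List.map_cons, List.map_nil, Sum.elim_inl, Sum.elim_inr,
                      List.flatten, ihl, ihr]
                    show (a, false) :: ((expandT G.expandN l).serialize ++
                        ((expandT G.expandN r).serialize ++ ([(a, true)] ++ []))) = _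
                    simp [expandT, PTree.serialize]
                · next hne2 =>
                    cases hP : G.P B' with
                    | leaf => rfl
                    | param j => rfl
                    | term a l r => exact absurd (hne2 a l r hP) (fun h => h)
                    | nt C ts' => exact absurd (hne C ts' hP) (fun h => h)
        have h2 := claim B hv
        rw [h2]
        rfl

end SLTSLP
end Value

section Final
open PTree

namespace SLTSLP

variable {L N : Type}

lemma value_H0_start [Fintype N] (G : SLT L N) (h0 : ∀ A, G.rank A = 0)
    (rs : List (List Bool)) (t : PTree L N) (hg : Ground t)
    (hr : Relation.ReflTransGen (SLT.Rw G) (G.P G.start) t)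
    (hvp : ∀ p ∈ rs, ValidPos t p) :
    (H0 G rs).value (Sum.inl ()) =
      (rs.map fun p => (t.subtreeAt p).serialize).flatten := by
  have ht : t = expandT G.expandN (G.P G.start) := SLT.ground_eq_expand h0 hg hr
  rw [SLP.value_eq]
  show (List.map _ (prod0 G rs (Sum.inl ()))).flatten = _
  simp only [prod0, List.map_map]
  refine congrArg List.flatten (List.map_congr_left ?_)
  intro p hp
  have hm := G.loc_mem G.start (G.P G.start) p (self_mem_subT _)
  have hvideq : ValidPos (expandT G.expandN (G.P G.start)) p := ht ▸ hvp p hp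
  have hspec := G.loc_spec G.start (G.P G.start) p (self_mem_subT _) hvideq
  have hval := value_refV G rs _ _ _ hm rfl
  simp only [Function.comp_apply, Sum.elim_inr]
  rw [hval, ← hspec, ← ht]

/-- Cost function for productions. -/
def costf : PTree L N → ℕ
  | .term _ _ _ => 4
  | _ => 0

lemma len_prod0_inr [Fintype N] (G : SLT L N) (rs : List (List Bool)) (A : N)
    (i : Fin (G.P A).subT.length) :
    (prod0 G rs (Sum.inr ⟨A, i⟩)).length = costf ((G.P A).subT.get i) := by
  simp only [prod0]
  cases hu : (G.P A).subT.get i <;> rfl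

lemma size_H0 [Fintype N] (G : SLT L N) (rs : List (List Bool)) :
    (H0 G rs).size ≤ 2 * (G.size + rs.length + 1) := by
  have hsum : (H0 G rs).size
      = (prod0 G rs (Sum.inl ())).length
        + ∑ s : Σ A : N, Fin (G.P A).subT.length, (prod0 G rs (Sum.inr s)).length := by
    unfold SLP.size
    rw [Fintype.sum_sum_type]
    rfl
  have h1 : (prod0 G rs (Sum.inl ())).length = rs.length := by
    simp [prod0]
  have h2 : ∑ s : Σ A : N, Fin (G.P A).subT.length, (prod0 G rs (Sum.inr s)).length
      = ∑ A : N, ∑ i : Fin (G.P A).subT.length, costf ((G.P A).subT.get i) := by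
    rw [← Finset.univ_sigma_univ, Finset.sum_sigma]
    refine Finset.sum_congr rfl fun A _ => Finset.sum_congr rfl fun i _ => ?_
    exact len_prod0_inr G rs A i
  have h3 : ∀ A : N, ∑ i : Fin (G.P A).subT.length, costf ((G.P A).subT.get i)
      ≤ 2 * ((G.P A).nodeCount - 1) := by
    intro A
    have := Fin.sum_univ_fun_getElem (G.P A).subT costf
    rw [show (∑ i : Fin (G.P A).subT.length, costf ((G.P A).subT.get i))
        = ∑ i : Fin (G.P A).subT.length, costf ((G.P A).subT[i.1]) from rfl, this]
    refine subT_cost_le _ _ ?_ ?_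
    · intro u hu
      cases u with
      | term a l r => exact absurd rfl (hu a l r)
      | leaf => rfl
      | param j => rfl
      | nt B ts => rfl
    · intro a l r; exact le_refl 4
  have h4 : ∑ A : N, ∑ i : Fin (G.P A).subT.length, costf ((G.P A).subT.get i)
      ≤ 2 * G.size := by
    unfold SLT.size
    rw [Finset.mul_sum]
    exact Finset.sum_le_sum fun A _ => h3 A
  omega

end SLTSLP
end Final

/-- There is a constant `c > 0` such that for every 0-SLT
grammar `G` (an SLT grammar all of whose nonterminals have rank 0, i.e. a
DAG) and every subset `R` of the nodes of the tree derived by `G` (given as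
the list `rs` of its positions in pre-order), there is a straight-line
program of size `O(|G| + |R|)` that generates the concatenation, in pre-order
of the nodes of `R`, of the serializations of the subtrees rooted at the
nodes in `R`. -/
theorem slp_for_selected_subtrees_dag :
    ∃ c : ℕ, 0 < c ∧
      ∀ (L N : Type) [Fintype N] (G : SLT L N), (∀ A, G.rank A = 0) →
        ∀ rs : List (List Bool),
          ∃ (m : ℕ) (H : SLP (L × Bool) (Fin m)),
            SLP.size H ≤ c * (SLT.size G + rs.length + 1) ∧
            ∀ t : PTree L N, PTree.Ground t →
              Relation.ReflTransGen (SLT.Rw G) (G.P G.start) t →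
              (∀ p ∈ rs, PTree.ValidPos t p) → rs.Pairwise preLt →
              H.Generates (rs.map (fun p => (t.subtreeAt p).serialize)).flatten := by
  refine ⟨2, by norm_num, ?_⟩
  intro L N _ G h0 rs
  refine ⟨Fintype.card (SLTSLP.V0 G), (SLTSLP.H0 G rs).mapV (Fintype.equivFin _), ?_, ?_⟩
  · rw [SLP.mapV_size]
    exact SLTSLP.size_H0 G rs
  · intro t hg hr hvp _
    apply SLP.mapV_generates
    have h := (SLTSLP.H0 G rs).generates_value
    rwa [show (SLTSLP.H0 G rs).start = Sum.inl () from rfl,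
      SLTSLP.value_H0_start G h0 rs t hg hr hvp] at h
end

section
/- Node normal form for 0-SLT grammars: every 0-SLT grammar G can be transformed into a 0-SLT grammar G'' in node normal form, i.e., one in which the right-hand side of every rule contains exactly one terminal symbol, such that val(G'')=val(G) and the size of G'' equals the size of G (the number of nonterminals may increase); moreover, in G'' every subtree of val(G'') rooted at a non-leaf node equals val(B) for some nonterminal B of G''. -/
namespace PTree

variable {L N : Type}

/-- The number of terminal symbols occurring in a right-hand side
(`_`-leaves, parameters and nonterminals do not count). -/
def termCount : PTree L N → ℕ
  | .leaf => 0
  | .param _ => 0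
  | .term _ l r => 1 + termCount l + termCount r
  | .nt _ ts => (ts.attach.map (fun t => termCount t.1)).sum
decreasing_by
  all_goals simp_wf
  all_goals try omega
  all_goals (have := List.sizeOf_lt_of_mem t.2; omega)

/-- Retype a ground tree over another nonterminal alphabet (ground trees
contain no nonterminals and no parameters, so this is the identity on the
trees we care about). -/
def retype {M : Type} : PTree L N → PTree L M
  | .leaf => .leaf
  | .param i => .param i
  | .term a l r => .term a (retype l) (retype r)
  | .nt _ _ => .leaf

end PTree

namespace NNF

open PTree Relation

variable {L N : Type}

/-- Substituting into a parameter-free tree is the identity. -/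
theorem subst_nil (env : List (PTree L N)) :
    ∀ t : PTree L N, paramList t = [] → PTree.subst env t = t
  | .leaf, _ => by simp [PTree.subst]
  | .param i, h => by simp [paramList] at h
  | .term a l r, h => by
      simp only [paramList, List.append_eq_nil_iff] at h
      simp [PTree.subst, subst_nil env l h.1, subst_nil env r h.2]
  | .nt B ts, h => by
      simp only [paramList, List.flatten_eq_nil_iff, List.mem_map] at h
      have hts : ∀ t ∈ ts, PTree.subst env t = t := by
        intro t ht
        exact subst_nil env t (h _ ⟨⟨t, ht⟩, List.mem_attach _ _, rfl⟩)
      simp only [PTree.subst]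
      congr 1
      calc ts.attach.map (fun t => PTree.subst env t.1)
          = ts.attach.map (fun t => t.1) := by
            apply List.map_congr_left; intro x _; exact hts x.1 x.2
        _ = ts := List.attach_map_subtype_val ts
decreasing_by
  all_goals simp_wf
  all_goals try omega
  all_goals (have := List.sizeOf_lt_of_mem ht; omega)

end NNF
namespace NNF
open PTree Relation

variable {L N : Type}

/-- Expand a tree, replacing every nonterminal node by `g` of its label. -/
def expandH (g : N → PTree L N) : PTree L N → PTree L N
  | .leaf => .leaf
  | .param _ => .leaf
  | .term a l r => .term a (expandH g l) (expandH g r)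
  | .nt A _ => g A

theorem expandH_congr {g g' : N → PTree L N} :
    ∀ t : PTree L N, (∀ B, Occurs B t → g B = g' B) →
      expandH g t = expandH g' t
  | .leaf, _ => rfl
  | .param _, _ => rfl
  | .term a l r, h => by
      simp only [expandH]
      rw [expandH_congr l (fun B hB => h B (.term_left a hB)),
          expandH_congr r (fun B hB => h B (.term_right a hB))]
  | .nt A ts, h => h A (.here ts)

theorem ground_expandH {g : N → PTree L N} :
    ∀ t : PTree L N, (∀ B, Occurs B t → Ground (g B)) →
      Ground (expandH g t)
  | .leaf, _ => .leaf
  | .param _, _ => .leaf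
  | .term a l r, h =>
      .term a (ground_expandH l (fun B hB => h B (.term_left a hB)))
        (ground_expandH r (fun B hB => h B (.term_right a hB)))
  | .nt A _, h => h A (.here _)

variable (G : SLT L N)

/-- `B` occurs in the right-hand side of `A`. -/
def Rel (B A : N) : Prop := Occurs B (G.P A)

theorem wfRel [Finite N] : WellFounded (Rel G) := by
  have hirr : IsIrrefl N (Relation.TransGen (Rel G)) := by
    constructor
    intro A hA
    exact G.acyclic A (by rwa [← Relation.transGen_swap] at hA)
  have : WellFounded (Relation.TransGen (Rel G)) :=
    Finite.wellFounded_of_trans_of_irrefl _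
  exact Subrelation.wf (fun h => Relation.TransGen.single h) this

variable [Finite N]

open Classical in
/-- The tree derived from a nonterminal. -/
noncomputable def valNT : N → PTree L N :=
  (wfRel G).fix (fun A ih =>
    expandH (fun B => if h : Rel G B A then ih B h else .leaf) (G.P A))

/-- The tree derived from an arbitrary tree. -/
noncomputable def val (t : PTree L N) : PTree L N := expandH (valNT G) t

theorem valNT_eq (A : N) : valNT G A = val G (G.P A) := by
  rw [valNT, WellFounded.fix_eq]
  exact expandH_congr _ (fun B hB => by rw [dif_pos (show Rel G B A from hB)]; rfl)

theorem ground_valNT (A : N) : Ground (valNT G A) := by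
  induction A using (wfRel G).induction with
  | _ A ih =>
    rw [valNT_eq]
    exact ground_expandH _ (fun B hB => ih B hB)

theorem val_ground {t : PTree L N} (h : Ground t) : val G t = t := by
  induction h with
  | leaf => rfl
  | term a _ _ ihl ihr => simp only [val, expandH] at *; rw [ihl, ihr]

end NNF
namespace NNF
open PTree Relation

variable {L N : Type} (G : SLT L N) [Finite N]

theorem paramList_P_nil (h0 : ∀ A, G.rank A = 0) (A : N) :
    paramList (G.P A) = [] := by
  rw [G.params A, h0 A]; rfl

theorem val_rw (h0 : ∀ A, G.rank A = 0) {t t' : PTree L N}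
    (h : SLT.Rw G t t') : val G t = val G t' := by
  induction h with
  | head A ts =>
      rw [subst_nil _ _ (paramList_P_nil G h0 A)]
      show valNT G A = _
      rw [valNT_eq]
  | term_left a r _ ih => simp only [val, expandH] at *; rw [ih]
  | term_right a l _ ih => simp only [val, expandH] at *; rw [ih]
  | nt_child B u v _ _ => rfl

theorem val_rtg (h0 : ∀ A, G.rank A = 0) {t t' : PTree L N}
    (h : Relation.ReflTransGen (SLT.Rw G) t t') : val G t = val G t' := by
  induction h with
  | refl => rfl
  | tail _ h ih => rw [ih, val_rw G h0 h]

theorem rtg_term_left {t t' r : PTree L N} (a : L)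
    (h : Relation.ReflTransGen (SLT.Rw G) t t') :
    Relation.ReflTransGen (SLT.Rw G) (.term a t r) (.term a t' r) :=
  Relation.ReflTransGen.lift (fun x => PTree.term a x r)
    (fun _ _ hr => SLT.Rw.term_left a r hr) _ _ h

theorem rtg_term_right {t t' l : PTree L N} (a : L)
    (h : Relation.ReflTransGen (SLT.Rw G) t t') :
    Relation.ReflTransGen (SLT.Rw G) (.term a l t) (.term a l t') :=
  Relation.ReflTransGen.lift (fun x => PTree.term a l x)
    (fun _ _ hr => SLT.Rw.term_right a l hr) _ _ h

theorem reach_gen :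
    ∀ t : PTree L N, paramList t = [] →
      (∀ B, Occurs B t → ∀ ts, Relation.ReflTransGen (SLT.Rw G) (.nt B ts) (valNT G B)) →
      Relation.ReflTransGen (SLT.Rw G) t (val G t)
  | .leaf, _, _ => .refl
  | .param i, h, _ => by simp [paramList] at h
  | .term a l r, h, hocc => by
      simp only [paramList, List.append_eq_nil_iff] at h
      have hl := reach_gen l h.1 (fun B hB => hocc B (.term_left a hB))
      have hr := reach_gen r h.2 (fun B hB => hocc B (.term_right a hB))
      exact ((rtg_term_left G a hl).trans (rtg_term_right G a hr))
  | .nt B ts, _, hocc => hocc B (.here ts) ts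

theorem reach_nt (h0 : ∀ A, G.rank A = 0) (A : N) :
    ∀ ts, Relation.ReflTransGen (SLT.Rw G) (.nt A ts) (valNT G A) := by
  induction A using (wfRel G).induction with
  | _ A ih =>
    intro ts
    have h1 : SLT.Rw G (.nt A ts) (PTree.subst ts (G.P A)) := SLT.Rw.head A ts
    rw [subst_nil _ _ (paramList_P_nil G h0 A)] at h1
    have h2 := reach_gen G (G.P A) (paramList_P_nil G h0 A)
      (fun B hB => ih B hB)
    rw [valNT_eq]
    exact Relation.ReflTransGen.head h1 h2

theorem reach_start (h0 : ∀ A, G.rank A = 0) :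
    Relation.ReflTransGen (SLT.Rw G) (G.P G.start) (valNT G G.start) := by
  rw [valNT_eq]
  exact reach_gen G _ (paramList_P_nil G h0 _) (fun B _ => reach_nt G h0 B)

theorem unique_ground (h0 : ∀ A, G.rank A = 0) {t : PTree L N}
    (hg : Ground t) (h : Relation.ReflTransGen (SLT.Rw G) (G.P G.start) t) :
    t = valNT G G.start := by
  have := val_rtg G h0 h
  rw [val_ground G hg] at this
  rw [← this, valNT_eq]

end NNF
set_option linter.unusedSectionVars false
namespace NNF
open PTree Relation

variable {L N : Type}

/-- All subtrees rooted at terminal-labeled nodes. -/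
def termSubtrees : PTree L N → List (PTree L N)
  | .term a l r => .term a l r :: (termSubtrees l ++ termSubtrees r)
  | _ => []

theorem self_mem_termSubtrees (a : L) (l r : PTree L N) :
    PTree.term a l r ∈ termSubtrees (PTree.term a l r) := by
  simp [termSubtrees]

theorem termSubtrees_trans :
    ∀ T x : PTree L N, x ∈ termSubtrees T → termSubtrees x ⊆ termSubtrees T
  | .term a l r, x, hx => by
      simp only [termSubtrees, List.mem_cons, List.mem_append] at hx
      rcases hx with rfl | hx | hx
      · exact fun y hy => hy
      · intro y hy
        simp only [termSubtrees, List.mem_cons, List.mem_append]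
        exact Or.inr (Or.inl (termSubtrees_trans l x hx hy))
      · intro y hy
        simp only [termSubtrees, List.mem_cons, List.mem_append]
        exact Or.inr (Or.inr (termSubtrees_trans r x hx hy))
  | .leaf, x, hx => by simp [termSubtrees] at hx
  | .param _, x, hx => by simp [termSubtrees] at hx
  | .nt _ _, x, hx => by simp [termSubtrees] at hx

theorem isTerm_of_mem_termSubtrees :
    ∀ T x : PTree L N, x ∈ termSubtrees T → ∃ a l r, x = PTree.term a l r
  | .term a l r, x, hx => by
      simp only [termSubtrees, List.mem_cons, List.mem_append] at hx
      rcases hx with rfl | hx | hx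
      · exact ⟨a, l, r, rfl⟩
      · exact isTerm_of_mem_termSubtrees l x hx
      · exact isTerm_of_mem_termSubtrees r x hx
  | .leaf, x, hx => by simp [termSubtrees] at hx
  | .param _, x, hx => by simp [termSubtrees] at hx
  | .nt _ _, x, hx => by simp [termSubtrees] at hx

theorem ground_of_mem_termSubtrees {T : PTree L N} (hg : Ground T) :
    ∀ x ∈ termSubtrees T, Ground x := by
  induction hg with
  | leaf => simp [termSubtrees]
  | term a hl hr ihl ihr =>
      intro x hx
      simp only [termSubtrees, List.mem_cons, List.mem_append] at hx
      rcases hx with rfl | hx | hx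
      · exact .term a hl hr
      · exact ihl x hx
      · exact ihr x hx

theorem length_termSubtrees_le :
    ∀ T : PTree L N, (termSubtrees T).length ≤ termCount T
  | .term a l r => by
      simp only [termSubtrees, List.length_cons, List.length_append, termCount]
      have := length_termSubtrees_le l
      have := length_termSubtrees_le r
      omega
  | .leaf => by simp [termSubtrees, termCount]
  | .param _ => by simp [termSubtrees, termCount]
  | .nt _ _ => by simp [termSubtrees]

theorem subtreeAt_mem_termSubtrees {T : PTree L N} (hg : Ground T) :
    ∀ p, ValidPos T p → (∃ a l r, subtreeAt T p = PTree.term a l r) →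
      subtreeAt T p ∈ termSubtrees T := by
  induction hg with
  | leaf =>
      intro p hp ht
      cases p with
      | nil => obtain ⟨a, l, r, h⟩ := ht; simp [subtreeAt] at h
      | cons b q => simp [ValidPos] at hp
  | term a hl hr ihl ihr =>
      intro p hp ht
      cases p with
      | nil => exact self_mem_termSubtrees a _ _
      | cons b q =>
          simp only [ValidPos] at hp
          simp only [subtreeAt] at ht ⊢
          cases b with
          | false =>
              simp only [Bool.false_eq_true, ite_false] at hp ht ⊢
              simp only [termSubtrees, List.mem_cons, List.mem_append]
              exact Or.inr (Or.inl (ihl q hp ht))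
          | true =>
              simp only [ite_true] at hp ht ⊢
              simp only [termSubtrees, List.mem_cons, List.mem_append]
              exact Or.inr (Or.inr (ihr q hp ht))

/-- Node count of a rank-0, parameter-free right-hand side. -/
theorem nodeCount_eq {rank : N → ℕ} (h0 : ∀ A, rank A = 0) {t : PTree L N}
    (h : ArityOk rank t) : paramList t = [] →
      nodeCount t = 2 * termCount t + 1 := by
  induction h with
  | leaf => intro; simp [nodeCount, termCount]
  | param i => intro hp; simp [paramList] at hp
  | term a hl hr ihl ihr =>
      intro hp
      simp only [paramList, List.append_eq_nil_iff] at hp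
      simp only [nodeCount, termCount, ihl hp.1, ihr hp.2]
      ring
  | nt A hlen hts ih =>
      intro hp
      have : _ = 0 := hlen.trans (h0 A)
      rcases List.length_eq_zero_iff.mp this with rfl
      simp [nodeCount, termCount]

end NNF
namespace NNF
open PTree Relation

variable {L N : Type} (G : SLT L N) [Finite N] [Fintype N]

/-- All expansions of terminal subtrees of right-hand sides. -/
noncomputable def CL : List (PTree L N) :=
  (Finset.univ.toList (α := N)).flatMap
    (fun A => (termSubtrees (G.P A)).map (val G))

theorem sources_gen :
    ∀ t : PTree L N,
      (∀ B, Occurs B t → termSubtrees (valNT G B) ⊆ CL G) →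
      termSubtrees (val G t) ⊆ (termSubtrees t).map (val G) ++ CL G
  | .leaf, _ => by simp [val, expandH, termSubtrees]
  | .param _, _ => by simp [val, expandH, termSubtrees]
  | .term a l r, h => by
      intro x hx
      have hval : val G (.term a l r) = .term a (val G l) (val G r) := rfl
      rw [hval] at hx
      simp only [termSubtrees, List.mem_cons, List.mem_append] at hx
      rcases hx with rfl | hx | hx
      · apply List.mem_append_left
        exact List.mem_map.mpr ⟨.term a l r, self_mem_termSubtrees a l r, rfl⟩
      · have := sources_gen l (fun B hB => h B (.term_left a hB)) hx
        simp only [List.mem_append, List.mem_map] at this ⊢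
        rcases this with ⟨y, hy, rfl⟩ | hc
        · exact Or.inl ⟨y, by
            simp only [termSubtrees, List.mem_cons, List.mem_append]
            exact Or.inr (Or.inl hy), rfl⟩
        · exact Or.inr hc
      · have := sources_gen r (fun B hB => h B (.term_right a hB)) hx
        simp only [List.mem_append, List.mem_map] at this ⊢
        rcases this with ⟨y, hy, rfl⟩ | hc
        · exact Or.inl ⟨y, by
            simp only [termSubtrees, List.mem_cons, List.mem_append]
            exact Or.inr (Or.inr hy), rfl⟩
        · exact Or.inr hc
  | .nt B ts, h => fun x hx => List.mem_append_right _ (h B (.here ts) hx)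

theorem sources_nt (A : N) : termSubtrees (valNT G A) ⊆ CL G := by
  induction A using (wfRel G).induction with
  | _ A ih =>
    rw [valNT_eq]
    intro x hx
    rcases List.mem_append.mp (sources_gen G (G.P A) (fun B hB => ih B hB) hx) with h | h
    · exact List.mem_flatMap.mpr ⟨A, by simp, h⟩
    · exact h

theorem length_CL_le : (CL G).length ≤ ∑ A : N, termCount (G.P A) := by
  rw [CL, List.length_flatMap]
  calc ((Finset.univ.toList (α := N)).map
          (fun A => ((termSubtrees (G.P A)).map (val G)).length)).sum
      ≤ ((Finset.univ.toList (α := N)).map (fun A => termCount (G.P A))).sum := by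
        apply List.sum_le_sum
        intro A _
        rw [List.length_map]
        exact length_termSubtrees_le _
    _ = ∑ A : N, termCount (G.P A) := by
        rw [Finset.sum_map_toList]

end NNF
namespace NNF
open PTree Relation

variable {L N : Type} [DecidableEq (PTree L N)]

/-- The distinct terminal-rooted subtrees of `T0`. -/
def ss (T0 : PTree L N) : List (PTree L N) := (termSubtrees T0).dedup

/-- Index of a subtree among the distinct subtrees. -/
def idx (T0 : PTree L N) (s : ℕ) (hs : 0 < s) (x : PTree L N) :
    Fin s := ⟨(ss T0).idxOf x % s, Nat.mod_lt _ hs⟩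

/-- Reference to a subtree: a nonterminal if it is terminal-rooted, else a leaf. -/
def ref (T0 : PTree L N) (s : ℕ) (hs : 0 < s) :
    PTree L N → PTree L (Fin s)
  | .term a l r => .nt (idx T0 s hs (.term a l r)) []
  | _ => .leaf

/-- The production for a subtree. -/
def mkP (T0 : PTree L N) (a0 : L) (s : ℕ) (hs : 0 < s) :
    PTree L N → PTree L (Fin s)
  | .term a l r => .term a (ref T0 s hs l) (ref T0 s hs r)
  | _ => .term a0 .leaf .leaf

/-- The production map of the node-normal-form grammar. -/
def Pf (T0 : PTree L N) (a0 : L) (s : ℕ) (hs : 0 < s) (i : Fin s) :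
    PTree L (Fin s) :=
  if h : i.1 < (ss T0).length then mkP T0 a0 s hs ((ss T0).get ⟨i.1, h⟩)
  else .term a0 .leaf .leaf

theorem paramList_ref (T0 : PTree L N) (s : ℕ) (hs : 0 < s) (c : PTree L N) :
    paramList (ref T0 s hs c) = [] := by
  cases c <;> simp [ref, paramList]

theorem termCount_ref (T0 : PTree L N) (s : ℕ) (hs : 0 < s) (c : PTree L N) :
    termCount (ref T0 s hs c) = 0 := by
  cases c <;> simp [ref, termCount]

theorem nodeCount_ref (T0 : PTree L N) (s : ℕ) (hs : 0 < s) (c : PTree L N) :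
    nodeCount (ref T0 s hs c) = 1 := by
  cases c <;> simp [ref, nodeCount]

theorem arity_ref (T0 : PTree L N) (s : ℕ) (hs : 0 < s) (c : PTree L N) :
    ArityOk (fun _ : Fin s => 0) (ref T0 s hs c) := by
  cases c <;> first
    | exact ArityOk.leaf
    | exact ArityOk.nt _ rfl (by simp)

theorem exists_mkP (T0 : PTree L N) (a0 : L) (s : ℕ) (hs : 0 < s) (x : PTree L N) :
    ∃ (a : L) (c d : PTree L N),
      mkP T0 a0 s hs x = .term a (ref T0 s hs c) (ref T0 s hs d) := by
  cases x with
  | term a l r => exact ⟨a, l, r, rfl⟩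
  | leaf => exact ⟨a0, .leaf, .leaf, rfl⟩
  | param i => exact ⟨a0, .leaf, .leaf, rfl⟩
  | nt A ts => exact ⟨a0, .leaf, .leaf, rfl⟩

theorem exists_Pf (T0 : PTree L N) (a0 : L) (s : ℕ) (hs : 0 < s) (i : Fin s) :
    ∃ (a : L) (c d : PTree L N),
      Pf T0 a0 s hs i = .term a (ref T0 s hs c) (ref T0 s hs d) := by
  rw [Pf]
  split
  · exact exists_mkP _ _ _ _ _
  · exact ⟨a0, .leaf, .leaf, rfl⟩

theorem paramList_Pf (T0 : PTree L N) (a0 : L) (s : ℕ) (hs : 0 < s) (i : Fin s) :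
    paramList (Pf T0 a0 s hs i) = [] := by
  obtain ⟨a, c, d, h⟩ := exists_Pf T0 a0 s hs i
  rw [h]
  simp [paramList, paramList_ref]

theorem termCount_Pf (T0 : PTree L N) (a0 : L) (s : ℕ) (hs : 0 < s) (i : Fin s) :
    termCount (Pf T0 a0 s hs i) = 1 := by
  obtain ⟨a, c, d, h⟩ := exists_Pf T0 a0 s hs i
  rw [h]
  simp [termCount, termCount_ref]

theorem nodeCount_Pf (T0 : PTree L N) (a0 : L) (s : ℕ) (hs : 0 < s) (i : Fin s) :
    nodeCount (Pf T0 a0 s hs i) = 3 := by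
  obtain ⟨a, c, d, h⟩ := exists_Pf T0 a0 s hs i
  rw [h]
  simp [nodeCount, nodeCount_ref]

theorem arity_Pf (T0 : PTree L N) (a0 : L) (s : ℕ) (hs : 0 < s) (i : Fin s) :
    ArityOk (fun _ : Fin s => 0) (Pf T0 a0 s hs i) := by
  obtain ⟨a, c, d, h⟩ := exists_Pf T0 a0 s hs i
  rw [h]
  exact ArityOk.term a (arity_ref _ _ _ _) (arity_ref _ _ _ _)

theorem idx_spec {T0 x : PTree L N} {s : ℕ} (hs : 0 < s)
    (hds : (ss T0).length ≤ s) (hx : x ∈ ss T0) :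
    (idx T0 s hs x).1 = (ss T0).idxOf x ∧
      (ss T0).idxOf x < (ss T0).length := by
  have hlt : (ss T0).idxOf x < (ss T0).length := List.idxOf_lt_length_iff.mpr hx
  constructor
  · show (ss T0).idxOf x % s = _
    exact Nat.mod_eq_of_lt (lt_of_lt_of_le hlt hds)
  · exact hlt

theorem Pf_idx {T0 x : PTree L N} (a0 : L) {s : ℕ} (hs : 0 < s)
    (hds : (ss T0).length ≤ s) (hx : x ∈ ss T0) :
    Pf T0 a0 s hs (idx T0 s hs x) = mkP T0 a0 s hs x := by
  obtain ⟨h1, h2⟩ := idx_spec hs hds hx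
  rw [Pf, dif_pos (by rw [h1]; exact h2)]
  congr 1
  have : (ss T0).get ⟨(idx T0 s hs x).1, by rw [h1]; exact h2⟩
      = (ss T0).get ⟨(ss T0).idxOf x, h2⟩ := by congr 1; exact Fin.ext h1
  rw [this, List.idxOf_get]

theorem getD_idx {T0 x : PTree L N} {s : ℕ} (hs : 0 < s)
    (hds : (ss T0).length ≤ s) (hx : x ∈ ss T0) :
    (ss T0).getD (idx T0 s hs x).1 PTree.leaf = x := by
  obtain ⟨h1, h2⟩ := idx_spec hs hds hx
  rw [h1, List.getD_eq_getElem _ _ h2, List.getElem_idxOf]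

/-- A left or right child that is terminal-rooted is itself in `ss`. -/
theorem child_mem_ss {T0 : PTree L N} {a : L} {l r : PTree L N}
    (hx : PTree.term a l r ∈ ss T0) {c : PTree L N}
    (hc : c = l ∨ c = r) (a' : L) (l' r' : PTree L N)
    (hct : c = PTree.term a' l' r') : c ∈ ss T0 := by
  have hxT : PTree.term a l r ∈ termSubtrees T0 := List.mem_dedup.mp hx
  have hsub := termSubtrees_trans T0 _ hxT
  apply List.mem_dedup.mpr
  apply hsub
  have hself : c ∈ termSubtrees c := by rw [hct]; exact self_mem_termSubtrees _ _ _
  simp only [termSubtrees, List.mem_cons, List.mem_append]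
  rcases hc with rfl | rfl
  · exact Or.inr (Or.inl hself)
  · exact Or.inr (Or.inr hself)

end NNF
namespace NNF
open PTree Relation

variable {L N : Type} [DecidableEq (PTree L N)]

theorem nodeCount_pos (t : PTree L N) : 1 ≤ nodeCount t := by
  cases t <;> simp [nodeCount] <;> omega

theorem occurs_lt {T0 : PTree L N} (a0 : L) {s : ℕ} (hs : 0 < s)
    (hds : (ss T0).length ≤ s) {A B : Fin s}
    (h : Occurs B (Pf T0 a0 s hs A)) :
    nodeCount ((ss T0).getD B.1 PTree.leaf) <
      nodeCount ((ss T0).getD A.1 PTree.leaf) := by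
  rw [Pf] at h
  split at h
  case isFalse hA => cases h with
    | term_left _ h => cases h
    | term_right _ h => cases h
  case isTrue hA =>
    set x := (ss T0).get ⟨A.1, hA⟩ with hxdef
    have hxss : x ∈ ss T0 := List.get_mem _ _
    obtain ⟨a, l, r, hxt⟩ := isTerm_of_mem_termSubtrees T0 x (List.mem_dedup.mp hxss)
    have hgetA : (ss T0).getD A.1 PTree.leaf = x := by
      rw [List.getD_eq_getElem _ _ hA]; rfl
    rw [hxt] at h
    simp only [mkP] at h
    have key : ∀ c : PTree L N, c = l ∨ c = r → Occurs B (ref T0 s hs c) →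
        nodeCount ((ss T0).getD B.1 PTree.leaf) ≤ nodeCount c := by
      intro c hcor hc
      cases c with
      | term a' l' r' =>
          have hcss : PTree.term a' l' r' ∈ ss T0 :=
            child_mem_ss (hxt ▸ hxss) hcor a' l' r' rfl
          simp only [ref] at hc
          cases hc with
          | here => rw [getD_idx hs hds hcss]
          | nt _ hmem _ => simp at hmem
      | leaf => cases hc
      | param i => cases hc
      | nt A' ts => cases hc
    have hcount : nodeCount x = 1 + nodeCount l + nodeCount r := by
      rw [hxt]; simp [nodeCount]
    have hl1 := nodeCount_pos l
    have hr1 := nodeCount_pos r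
    rw [hgetA]
    cases h with
    | term_left _ h => have := key l (Or.inl rfl) h; omega
    | term_right _ h => have := key r (Or.inr rfl) h; omega

/-- The node-normal-form grammar of a ground tree `T0`. -/
def GNF (T0 : PTree L N) (a0 : L) (s : ℕ) (hs : 0 < s)
    (hds : (ss T0).length ≤ s) : SLT L (Fin s) where
  rank := fun _ => 0
  start := idx T0 s hs T0
  P := Pf T0 a0 s hs
  rank_start := rfl
  arity := fun i => arity_Pf T0 a0 s hs i
  params := fun i => paramList_Pf T0 a0 s hs i
  acyclic := by
    intro A hA
    have key : ∀ X Y : Fin s,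
        Relation.TransGen (fun X Y => Occurs Y (Pf T0 a0 s hs X)) X Y →
        nodeCount ((ss T0).getD Y.1 PTree.leaf) <
          nodeCount ((ss T0).getD X.1 PTree.leaf) := by
      intro X Y h
      induction h with
      | single h => exact occurs_lt a0 hs hds h
      | tail _ h ih => exact lt_trans (occurs_lt a0 hs hds h) ih
    exact lt_irrefl _ (key A A hA)

theorem derive_aux {T0 : PTree L N} (a0 : L) {s : ℕ} (hs : 0 < s)
    (hds : (ss T0).length ≤ s) (hg : Ground T0) :
    ∀ n x, x ∈ ss T0 → nodeCount x ≤ n →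
      Relation.ReflTransGen (SLT.Rw (GNF T0 a0 s hs hds))
        (Pf T0 a0 s hs (idx T0 s hs x)) x.retype := by
  intro n
  induction n with
  | zero =>
      intro x hx hn
      have := nodeCount_pos x
      omega
  | succ n ih =>
      intro x hx hn
      obtain ⟨a, l, r, hxt⟩ := isTerm_of_mem_termSubtrees T0 x (List.mem_dedup.mp hx)
      subst hxt
      have hgx : Ground (PTree.term a l r) :=
        ground_of_mem_termSubtrees hg _ (List.mem_dedup.mp hx)
      have hgl : Ground l := by cases hgx with | term _ h1 h2 => exact h1
      have hgr : Ground r := by cases hgx with | term _ h1 h2 => exact h2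
      rw [Pf_idx a0 hs hds hx]
      simp only [mkP]
      have hcount : nodeCount (PTree.term a l r) = 1 + nodeCount l + nodeCount r := by
        simp [nodeCount]
      have hl1 := nodeCount_pos l
      have hr1 := nodeCount_pos r
      have step : ∀ c : PTree L N, Ground c → (c = l ∨ c = r) →
          Relation.ReflTransGen (SLT.Rw (GNF T0 a0 s hs hds))
            (ref T0 s hs c) c.retype := by
        intro c hgc hcor
        cases c with
        | leaf => exact .refl
        | param i => cases hgc
        | nt _ _ => cases hgc
        | term a' l' r' =>
            have hcss : PTree.term a' l' r' ∈ ss T0 :=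
              child_mem_ss hx hcor a' l' r' rfl
            have hclt : nodeCount (PTree.term a' l' r') ≤ n := by
              rcases hcor with h | h <;> rw [h] <;> omega
            have hPc := ih _ hcss hclt
            have hhead : SLT.Rw (GNF T0 a0 s hs hds)
                (.nt (idx T0 s hs (PTree.term a' l' r')) [])
                (Pf T0 a0 s hs (idx T0 s hs (PTree.term a' l' r'))) := by
              have h1 := SLT.Rw.head (G := GNF T0 a0 s hs hds)
                (idx T0 s hs (PTree.term a' l' r')) []
              rw [show (GNF T0 a0 s hs hds).P = Pf T0 a0 s hs from rfl] at h1
              rwa [subst_nil _ _ (paramList_Pf T0 a0 s hs _)] at h1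
            exact Relation.ReflTransGen.head hhead hPc
      have hl := step l hgl (Or.inl rfl)
      have hr := step r hgr (Or.inr rfl)
      show Relation.ReflTransGen _ _ (PTree.term a l.retype r.retype)
      exact (rtg_term_left _ a hl).trans (rtg_term_right _ a hr)

theorem derive_nt {T0 : PTree L N} (a0 : L) {s : ℕ} (hs : 0 < s)
    (hds : (ss T0).length ≤ s) (hg : Ground T0) {x : PTree L N} (hx : x ∈ ss T0) :
    Relation.ReflTransGen (SLT.Rw (GNF T0 a0 s hs hds))
      (.nt (idx T0 s hs x) []) x.retype := by
  have h1 := SLT.Rw.head (G := GNF T0 a0 s hs hds) (idx T0 s hs x) []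
  rw [show (GNF T0 a0 s hs hds).P = Pf T0 a0 s hs from rfl] at h1
  rw [subst_nil _ _ (paramList_Pf T0 a0 s hs _)] at h1
  exact Relation.ReflTransGen.head h1 (derive_aux a0 hs hds hg _ x hx le_rfl)

end NNF
/-- Node normal form for 0-SLT grammars: every 0-SLT grammar
`G` (whose derived tree is not the single leaf `_`) can be transformed into a
0-SLT grammar `G''` in node normal form — the right-hand side of every rule
contains exactly one terminal symbol — such that `G''` derives the same tree
and has exactly the same size as `G` (the number of nonterminals may
increase), and every subtree of the derived tree rooted at a non-leaf node is
the tree derived from some nonterminal `B` of `G''`. -/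
theorem node_normal_form (L N : Type) [Fintype N] (G : SLT L N)
    (h0 : ∀ A, G.rank A = 0)
    (hnontriv : ∀ t : PTree L N, PTree.Ground t →
      Relation.ReflTransGen (SLT.Rw G) (G.P G.start) t → t ≠ PTree.leaf) :
    ∃ (m : ℕ) (G'' : SLT L (Fin m)),
      (∀ B, G''.rank B = 0) ∧
      (∀ B, PTree.termCount (G''.P B) = 1) ∧
      SLT.size G'' = SLT.size G ∧
      ∀ t : PTree L N, PTree.Ground t →
        Relation.ReflTransGen (SLT.Rw G) (G.P G.start) t →
        Relation.ReflTransGen (SLT.Rw G'') (G''.P G''.start) t.retype ∧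
        ∀ p : List Bool, PTree.ValidPos t p →
          (∃ (a : L) (l r : PTree L N), t.subtreeAt p = PTree.term a l r) →
          ∃ B : Fin m,
            Relation.ReflTransGen (SLT.Rw G'') (PTree.nt B [])
              (t.subtreeAt p).retype := by
  classical
  obtain ⟨T0, hT0def⟩ : ∃ x, NNF.valNT G G.start = x := ⟨_, rfl⟩
  have hg : PTree.Ground T0 := hT0def ▸ NNF.ground_valNT G G.start
  have hreach : Relation.ReflTransGen (SLT.Rw G) (G.P G.start) T0 :=
    hT0def ▸ NNF.reach_start G h0
  have hne : T0 ≠ PTree.leaf := hnontriv T0 hg hreach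
  obtain ⟨a0, l0, r0, hT0t⟩ : ∃ a l r, T0 = PTree.term a l r := by
    cases hg with
    | leaf => exact absurd rfl hne
    | term a hl hr => exact ⟨a, _, _, rfl⟩
  set s := ∑ A : N, PTree.termCount (G.P A) with hsdef
  have hT0mem : T0 ∈ NNF.ss T0 := by
    apply List.mem_dedup.mpr
    rw [hT0t]
    exact NNF.self_mem_termSubtrees _ _ _
  have hds : (NNF.ss T0).length ≤ s := by
    have hsub : NNF.ss T0 ⊆ NNF.CL G := fun x hx =>
      NNF.sources_nt G G.start (hT0def.symm ▸ List.mem_dedup.mp hx)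
    exact le_trans
      (List.subperm_of_subset (List.nodup_dedup _) hsub).length_le
      (NNF.length_CL_le G)
  have hs : 0 < s := lt_of_lt_of_le (List.length_pos_of_mem hT0mem) hds
  refine ⟨s, NNF.GNF T0 a0 s hs hds, fun B => rfl,
    fun B => NNF.termCount_Pf T0 a0 s hs B, ?_, ?_⟩
  · show SLT.size (NNF.GNF T0 a0 s hs hds) = SLT.size G
    rw [SLT.size, SLT.size]
    have h1 : ∀ i : Fin s,
        PTree.nodeCount ((NNF.GNF T0 a0 s hs hds).P i) - 1 = 2 := fun i => by
      rw [show (NNF.GNF T0 a0 s hs hds).P = NNF.Pf T0 a0 s hs from rfl,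
        NNF.nodeCount_Pf]
    have h2 : ∀ A : N, PTree.nodeCount (G.P A) - 1 = 2 * PTree.termCount (G.P A) :=
      fun A => by
        rw [NNF.nodeCount_eq h0 (G.arity A) (NNF.paramList_P_nil G h0 A)]
        omega
    rw [Finset.sum_congr rfl (fun i _ => h1 i),
      Finset.sum_congr rfl (fun A _ => h2 A), ← Finset.mul_sum, ← hsdef]
    simp [Finset.sum_const, Finset.card_univ, mul_comm]
  · intro t hgt hrt
    have ht : t = T0 := hT0def ▸ NNF.unique_ground G h0 hgt hrt
    subst ht
    constructor
    · exact NNF.derive_aux a0 hs hds hg (PTree.nodeCount t) t hT0mem le_rfl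
    · intro p hp hterm
      have hxmem : PTree.subtreeAt t p ∈ NNF.ss t :=
        List.mem_dedup.mpr (NNF.subtreeAt_mem_termSubtrees hg p hp hterm)
      exact ⟨NNF.idx t s hs _, NNF.derive_nt a0 hs hds hg hxmem⟩
end
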